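/- For every integer n ≥ 1 and every nonnegative integer r, ∑_{i=0}^{r} (−1)^{r−i}·C(r,i)·∑_{j=0}^{∞} ((−1)^j/j!)·w_{n,i+j} = (r!/e)·w̃_{n,r}, where each inner series ∑_{j≥0} ((−1)^j/j!)·w_{n,i+j} converges. In particular (r = 0), ∑_{j=0}^{∞} ((−1)^j/j!)·w_{n,j} = w̃_n/e. -/

import Mathlib

/-- Stirling numbers of the second kind. -/
def stirling2 : ℕ → ℕ → ℕ
  | 0, 0 => 1
  | 0, _ + 1 => 0
  | _ + 1, 0 => 0
  | n + 1, k + 1 => (k + 1) * stirling2 n (k + 1) + stirling2 n k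

/-- Derangement numbers `d_n = n! ∑_{i=0}^n (-1)^i / i!`. -/
noncomputable def derang (n : ℕ) : ℝ :=
  (n.factorial : ℝ) * ∑ i ∈ Finset.range (n + 1), (-1 : ℝ) ^ i / (i.factorial : ℝ)

/-- Partial derangement numbers `d_{n,r}`. -/
noncomputable def pderang (n r : ℕ) : ℝ :=
  if r ≤ n then (n.choose r : ℝ) * derang (n - r) else 0

/-- Partial deranged Bell numbers `w̃_{n,r}`. -/
noncomputable def pdb (n r : ℕ) : ℝ :=
  ∑ k ∈ Finset.range (n + 1), (stirling2 n k : ℝ) * pderang k r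

/-- `r`-ordered Bell numbers `w_{n,r} = ∑_{k=0}^∞ (k+r)^n / 2^{k+1}`. -/
noncomputable def ordBellR (n r : ℕ) : ℝ :=
  ∑' k : ℕ, ((k : ℝ) + (r : ℝ)) ^ n / 2 ^ (k + 1)

section AuxLemmas
open Finset

lemma stirling2_eq_zero {n k : ℕ} (h : n < k) : stirling2 n k = 0 := by
  induction n generalizing k with
  | zero => cases k with
    | zero => omega
    | succ k => rfl
  | succ n ih =>
    cases k with
    | zero => omega
    | succ k =>
      show (k + 1) * stirling2 n (k + 1) + stirling2 n k = 0
      rw [ih (by omega), ih (by omega)]; simp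

lemma pow_eq_sum_stirling (n x : ℕ) :
    x ^ n = ∑ k ∈ range (n + 1), stirling2 n k * x.descFactorial k := by
  induction n with
  | zero => simp [stirling2]
  | succ n ih =>
    have key : ∀ k, x * x.descFactorial k = x.descFactorial (k + 1) + k * x.descFactorial k := by
      intro k
      rcases le_or_gt k x with h | h
      · rw [Nat.descFactorial_succ]
        have : x = (x - k) + k := by omega
        nth_rewrite 1 [this]
        ring
      · rw [Nat.descFactorial_succ, Nat.descFactorial_eq_zero_iff_lt.2 h]
        simp
    have rhs : ∑ k ∈ range (n + 2), stirling2 (n + 1) k * x.descFactorial k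
        = ∑ k ∈ range (n + 1), stirling2 n k * x.descFactorial (k + 1)
          + ∑ k ∈ range (n + 1), (k * stirling2 n k) * x.descFactorial k := by
      rw [Finset.sum_range_succ' (fun k => stirling2 (n+1) k * x.descFactorial k) (n+1)]
      have h0 : stirling2 (n + 1) 0 * x.descFactorial 0 = 0 := by
        have : stirling2 (n+1) 0 = 0 := rfl
        rw [this]; ring
      rw [h0, add_zero]
      have step : ∀ k ∈ range (n+1), stirling2 (n+1) (k+1) * x.descFactorial (k+1)
          = (k+1) * stirling2 n (k+1) * x.descFactorial (k+1) + stirling2 n k * x.descFactorial (k+1) := by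
        intro k _
        have : stirling2 (n+1) (k+1) = (k+1) * stirling2 n (k+1) + stirling2 n k := rfl
        rw [this]; ring
      rw [Finset.sum_congr rfl step, Finset.sum_add_distrib, add_comm]
      congr 1
      rw [Finset.sum_range_succ' (fun k => k * stirling2 n k * x.descFactorial k) n,
        Finset.sum_range_succ (fun k => (k+1) * stirling2 n (k+1) * x.descFactorial (k+1)) n,
        stirling2_eq_zero (Nat.lt_succ_self n)]
      simp
    rw [rhs]
    calc x ^ (n + 1) = x * x ^ n := by ring
      _ = ∑ k ∈ range (n + 1), stirling2 n k * (x * x.descFactorial k) := by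
          rw [ih, Finset.mul_sum]; apply Finset.sum_congr rfl; intros; ring
      _ = _ := by
          rw [← Finset.sum_add_distrib]; apply Finset.sum_congr rfl; intro k _
          rw [key]; ring

lemma summable_choose_div_two_pow (m : ℕ) :
    Summable (fun j : ℕ => (j.choose m : ℝ) / 2 ^ (j + 1)) := by
  have h : Summable (fun j : ℕ => (j : ℝ) ^ m * (1/2 : ℝ) ^ j) :=
    summable_pow_mul_geometric_of_norm_lt_one m (by norm_num)
  apply Summable.of_nonneg_of_le (fun j => by positivity) _ h
  intro j
  have h1 : (j.choose m : ℝ) ≤ (j : ℝ) ^ m := by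
    exact_mod_cast (Nat.choose_le_descFactorial j m).trans (Nat.descFactorial_le_pow j m)
  have h2 : ((2:ℝ) ^ (j+1))⁻¹ ≤ (1/2 : ℝ) ^ j := by
    have e : ((2:ℝ) ^ (j+1))⁻¹ = (1/2 : ℝ) ^ (j+1) := by
      rw [one_div, inv_pow]
    rw [e]
    exact pow_le_pow_of_le_one (by norm_num) (by norm_num) (Nat.le_succ j)
  calc (j.choose m : ℝ) / 2 ^ (j + 1) = (j.choose m : ℝ) * ((2:ℝ) ^ (j+1))⁻¹ := by
        rw [div_eq_mul_inv]
    _ ≤ (j : ℝ) ^ m * (1/2 : ℝ) ^ j := by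
        apply mul_le_mul h1 h2 (by positivity) (by positivity)

lemma tsum_choose_div_two_pow (m : ℕ) :
    ∑' j : ℕ, (j.choose m : ℝ) / 2 ^ (j + 1) = 1 := by
  induction m with
  | zero =>
    simp only [Nat.choose_zero_right, Nat.cast_one]
    have : ∀ j : ℕ, (1 : ℝ) / 2 ^ (j + 1) = (1/2 : ℝ) * (1/2 : ℝ) ^ j := by
      intro j; rw [pow_succ]; field_simp; rw [← mul_pow]; norm_num
    rw [tsum_congr this, tsum_mul_left, tsum_geometric_of_lt_one (by norm_num) (by norm_num)]
    norm_num
  | succ m ih =>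
    set S := ∑' j : ℕ, (j.choose (m+1) : ℝ) / 2 ^ (j + 1) with hS
    have hsum := summable_choose_div_two_pow (m+1)
    have shift : S = (0 : ℝ) + ∑' j : ℕ, ((j+1).choose (m+1) : ℝ) / 2 ^ (j + 2) := by
      rw [hS, ← Summable.sum_add_tsum_nat_add 1 hsum]
      simp [Nat.choose_eq_zero_of_lt (Nat.succ_pos m)]
    have expand : ∀ j : ℕ, ((j+1).choose (m+1) : ℝ) / 2 ^ (j + 2)
        = (1/2 : ℝ) * ((j.choose m : ℝ) / 2 ^ (j+1)) + (1/2 : ℝ) * ((j.choose (m+1) : ℝ) / 2 ^ (j+1)) := by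
      intro j
      rw [Nat.choose_succ_succ]
      push_cast
      ring
    rw [tsum_congr expand] at shift
    rw [Summable.tsum_add ((summable_choose_div_two_pow m).mul_left _) ((summable_choose_div_two_pow (m+1)).mul_left _),
      tsum_mul_left, tsum_mul_left, ih, ← hS] at shift
    linarith

lemma exp_neg_one_tsum : ∑' j : ℕ, (-1 : ℝ) ^ j / (j.factorial : ℝ) = Real.exp (-1) := by
  rw [Real.exp_eq_exp_ℝ, NormedSpace.exp_eq_tsum_div]

lemma choose_shift_eq (b j : ℕ) :
    ((j + b).choose b : ℝ) / ((j + b).factorial : ℝ) = (b.factorial : ℝ)⁻¹ * (j.factorial : ℝ)⁻¹ := by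
  have h : (j + b).choose b * b.factorial * j.factorial = (j + b).factorial := by
    have := Nat.choose_mul_factorial_mul_factorial (Nat.le_add_left b j)
    simpa [Nat.add_sub_cancel] using this
  have hb : (b.factorial : ℝ) ≠ 0 := by positivity
  have hj : (j.factorial : ℝ) ≠ 0 := by positivity
  have hjb : ((j + b).factorial : ℝ) ≠ 0 := by positivity
  field_simp
  rw [← h]; push_cast; ring

lemma summable_expchoose (b : ℕ) :
    Summable (fun j : ℕ => (-1 : ℝ) ^ j / (j.factorial : ℝ) * (j.choose b : ℝ)) := by
  rw [← summable_nat_add_iff b]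
  have : (fun j : ℕ => (-1 : ℝ) ^ (j + b) / ((j + b).factorial : ℝ) * ((j + b).choose b : ℝ))
      = fun j : ℕ => ((-1 : ℝ) ^ b * (b.factorial : ℝ)⁻¹) * ((-1 : ℝ) ^ j * (j.factorial : ℝ)⁻¹) := by
    funext j
    have := choose_shift_eq b j
    have e : ((j + b).choose b : ℝ) * ((-1 : ℝ) ^ (j + b) / ((j + b).factorial : ℝ))
        = (-1 : ℝ) ^ (j + b) * (((j + b).choose b : ℝ) / ((j + b).factorial : ℝ)) := by ring
    rw [mul_comm, e, this, pow_add]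
    ring
  rw [this]
  apply Summable.mul_left
  have := Real.summable_pow_div_factorial (-1)
  simpa [div_eq_mul_inv] using this

lemma tsum_expchoose (b : ℕ) :
    ∑' j : ℕ, (-1 : ℝ) ^ j / (j.factorial : ℝ) * (j.choose b : ℝ)
      = (-1 : ℝ) ^ b / (b.factorial : ℝ) * Real.exp (-1) := by
  rw [← Summable.sum_add_tsum_nat_add b (summable_expchoose b)]
  have h0 : ∑ i ∈ range b, (-1 : ℝ) ^ i / (i.factorial : ℝ) * (i.choose b : ℝ) = 0 := by
    apply Finset.sum_eq_zero
    intro i hi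
    rw [Nat.choose_eq_zero_of_lt (mem_range.1 hi)]
    simp
  rw [h0, zero_add]
  have : (fun j : ℕ => (-1 : ℝ) ^ (j + b) / ((j + b).factorial : ℝ) * ((j + b).choose b : ℝ))
      = fun j : ℕ => ((-1 : ℝ) ^ b / (b.factorial : ℝ)) * ((-1 : ℝ) ^ j / (j.factorial : ℝ)) := by
    funext j
    have := choose_shift_eq b j
    have e : ((j + b).choose b : ℝ) * ((-1 : ℝ) ^ (j + b) / ((j + b).factorial : ℝ))
        = (-1 : ℝ) ^ (j + b) * (((j + b).choose b : ℝ) / ((j + b).factorial : ℝ)) := by ring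
    rw [mul_comm, e, this, pow_add]
    ring
  rw [this, tsum_mul_left, exp_neg_one_tsum]

lemma choose_add_expand (m k j : ℕ) :
    ((j + m).choose k : ℝ) = ∑ l ∈ range (k + 1), (m.choose l : ℝ) * ((j.choose (k - l)) : ℝ) := by
  rw [add_comm j m, Nat.add_choose_eq, Finset.Nat.sum_antidiagonal_eq_sum_range_succ_mk]
  push_cast
  rfl

lemma ordBell_closed (n m : ℕ) :
    ordBellR n m = ∑ k ∈ range (n + 1), (stirling2 n k : ℝ) * (k.factorial : ℝ) *
      ∑ l ∈ range (k + 1), (m.choose l : ℝ) := by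
  have ptwise : ∀ j : ℕ, ((j : ℝ) + (m : ℝ)) ^ n / 2 ^ (j + 1)
      = ∑ k ∈ range (n + 1), ∑ l ∈ range (k + 1),
          ((stirling2 n k : ℝ) * (k.factorial : ℝ) * (m.choose l : ℝ)) *
            ((j.choose (k - l) : ℝ) / 2 ^ (j + 1)) := by
    intro j
    have h1 : ((j : ℝ) + (m : ℝ)) = ((j + m : ℕ) : ℝ) := by push_cast; ring
    rw [h1, ← Nat.cast_pow, pow_eq_sum_stirling n (j + m)]
    push_cast
    rw [Finset.sum_div]
    apply Finset.sum_congr rfl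
    intro k _
    rw [Nat.descFactorial_eq_factorial_mul_choose]
    push_cast
    rw [choose_add_expand m k j, Finset.mul_sum, Finset.mul_sum, Finset.sum_div]
    apply Finset.sum_congr rfl
    intro l _
    ring
  rw [ordBellR, tsum_congr ptwise]
  have hsm : ∀ k ∈ range (n+1), Summable (fun j : ℕ => ∑ l ∈ range (k + 1),
      ((stirling2 n k : ℝ) * (k.factorial : ℝ) * (m.choose l : ℝ)) *
        ((j.choose (k - l) : ℝ) / 2 ^ (j + 1))) := by
    intro k _
    apply summable_sum
    intro l _
    exact Summable.mul_left _ (summable_choose_div_two_pow (k - l))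
  rw [Summable.tsum_finsetSum hsm]
  apply Finset.sum_congr rfl
  intro k _
  rw [Summable.tsum_finsetSum (fun l _ => Summable.mul_left _ (summable_choose_div_two_pow (k - l)))]
  rw [Finset.mul_sum]
  apply Finset.sum_congr rfl
  intro l _
  rw [tsum_mul_left, tsum_choose_div_two_pow]
  ring

lemma f_eq (n i : ℕ) : (fun j : ℕ => (-1 : ℝ) ^ j / (j.factorial : ℝ) * ordBellR n (i + j))
    = fun j : ℕ => ∑ k ∈ range (n + 1), ∑ l ∈ range (k + 1), ∑ a ∈ range (l + 1),
        ((stirling2 n k : ℝ) * (k.factorial : ℝ) * (i.choose a : ℝ)) *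
          ((-1 : ℝ) ^ j / (j.factorial : ℝ) * (j.choose (l - a) : ℝ)) := by
  funext j
  rw [ordBell_closed n (i + j), Finset.mul_sum]
  apply Finset.sum_congr rfl
  intro k _
  rw [Finset.mul_sum, Finset.mul_sum]
  apply Finset.sum_congr rfl
  intro l _
  rw [add_comm i j, choose_add_expand i l j, Finset.mul_sum, Finset.mul_sum]
  apply Finset.sum_congr rfl
  intro a _
  ring

lemma summable_f (n i : ℕ) :
    Summable (fun j : ℕ => (-1 : ℝ) ^ j / (j.factorial : ℝ) * ordBellR n (i + j)) := by
  rw [f_eq]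
  apply summable_sum; intro k _
  apply summable_sum; intro l _
  apply summable_sum; intro a _
  exact Summable.mul_left _ (summable_expchoose (l - a))

lemma tsum_f (n i : ℕ) :
    ∑' j : ℕ, (-1 : ℝ) ^ j / (j.factorial : ℝ) * ordBellR n (i + j)
      = ∑ k ∈ range (n + 1), ∑ l ∈ range (k + 1), ∑ a ∈ range (l + 1),
          ((stirling2 n k : ℝ) * (k.factorial : ℝ) * (i.choose a : ℝ)) *
            ((-1 : ℝ) ^ (l - a) / ((l - a).factorial : ℝ) * Real.exp (-1)) := by
  rw [tsum_congr (fun j => congrFun (f_eq n i) j)]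
  rw [Summable.tsum_finsetSum (fun k _ => summable_sum (fun l _ => summable_sum (fun a _ =>
    Summable.mul_left _ (summable_expchoose (l - a)))))]
  apply Finset.sum_congr rfl; intro k _
  rw [Summable.tsum_finsetSum (fun l _ => summable_sum (fun a _ =>
    Summable.mul_left _ (summable_expchoose (l - a))))]
  apply Finset.sum_congr rfl; intro l _
  rw [Summable.tsum_finsetSum (fun a _ => Summable.mul_left _ (summable_expchoose (l - a)))]
  apply Finset.sum_congr rfl; intro a _
  rw [tsum_mul_left, tsum_expchoose]

lemma alt_sum (m : ℕ) : ∑ t ∈ range (m + 1), (-1:ℝ) ^ (m - t) * (m.choose t : ℝ)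
    = if m = 0 then 1 else 0 := by
  have h : ∀ t ∈ range (m + 1), (-1:ℝ) ^ (m - t) * (m.choose t : ℝ)
      = (-1:ℝ) ^ m * ((-1:ℝ) ^ t * (m.choose t : ℝ)) := by
    intro t ht
    have htm : t ≤ m := by simpa [Nat.lt_succ_iff] using ht
    have : (-1:ℝ) ^ (m - t) * (-1:ℝ) ^ t = (-1:ℝ) ^ m := by
      rw [← pow_add, Nat.sub_add_cancel htm]
    calc (-1:ℝ) ^ (m - t) * (m.choose t : ℝ)
        = ((-1:ℝ) ^ (m - t) * (-1:ℝ) ^ t) * ((-1:ℝ) ^ t * (m.choose t : ℝ)) := by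
          rw [mul_assoc, ← mul_assoc ((-1:ℝ)^t), ← pow_add, ← two_mul,
            pow_mul]
          norm_num
      _ = (-1:ℝ) ^ m * ((-1:ℝ) ^ t * (m.choose t : ℝ)) := by rw [this]
  rw [Finset.sum_congr rfl h, ← Finset.mul_sum]
  have := Int.alternating_sum_range_choose (n := m)
  have hr : ∑ t ∈ range (m + 1), (-1:ℝ) ^ t * (m.choose t : ℝ)
      = ((if m = 0 then (1:ℤ) else 0 : ℤ) : ℝ) := by
    rw [← this]; push_cast; rfl
  rw [hr]
  rcases eq_or_ne m 0 with h0 | h0 <;> simp [h0]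

lemma delta_sum (r a : ℕ) :
    ∑ i ∈ range (r + 1), (-1:ℝ) ^ (r - i) * (r.choose i : ℝ) * (i.choose a : ℝ)
      = if a = r then 1 else 0 := by
  rcases le_or_gt a r with har | har
  · have hsplit : r + 1 = a + (r + 1 - a) := by omega
    rw [hsplit, Finset.sum_range_add]
    have h1 : ∑ i ∈ range a, (-1:ℝ) ^ (r - i) * (r.choose i : ℝ) * (i.choose a : ℝ) = 0 := by
      apply Finset.sum_eq_zero
      intro i hi
      rw [Nat.choose_eq_zero_of_lt (mem_range.1 hi)]
      simp
    rw [h1, zero_add]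
    have h2 : ∀ t ∈ range (r + 1 - a), (-1:ℝ) ^ (r - (a + t)) * (r.choose (a + t) : ℝ) * ((a + t).choose a : ℝ)
        = (r.choose a : ℝ) * ((-1:ℝ) ^ ((r - a) - t) * ((r - a).choose t : ℝ)) := by
      intro t ht
      have ht' : a + t ≤ r := by
        have := mem_range.1 ht; omega
      have := Nat.choose_mul (n := r) (k := a + t) (s := a) (Nat.le_add_right a t)
      have hcast : (r.choose (a + t) : ℝ) * ((a + t).choose a : ℝ)
          = (r.choose a : ℝ) * ((r - a).choose t : ℝ) := by
        rw [← Nat.cast_mul, this, Nat.add_sub_cancel_left]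
        push_cast; ring
      have hexp : r - (a + t) = (r - a) - t := by omega
      rw [mul_assoc, hcast, hexp]
      ring
    rw [Finset.sum_congr rfl h2, ← Finset.mul_sum]
    have hra : r + 1 - a = (r - a) + 1 := by omega
    rw [hra, alt_sum (r - a)]
    rcases eq_or_ne a r with he | he
    · simp [he, Nat.sub_self]
    · have : r - a ≠ 0 := by omega
      simp [this, he]
  · have h0 : ∑ i ∈ range (r + 1), (-1:ℝ) ^ (r - i) * (r.choose i : ℝ) * (i.choose a : ℝ) = 0 := by
      apply Finset.sum_eq_zero
      intro i hi
      have : i < a := by have := mem_range.1 hi; omega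
      rw [Nat.choose_eq_zero_of_lt this]
      ring
    rw [h0, if_neg (by omega)]

lemma per_k (k r : ℕ) :
    (k.factorial : ℝ) * ∑ l ∈ range (k + 1),
        (if r ≤ l then (-1:ℝ) ^ (l - r) / ((l - r).factorial : ℝ) else 0)
      = (r.factorial : ℝ) * pderang k r := by
  rcases le_or_gt r k with hrk | hrk
  · have hsplit : k + 1 = r + ((k - r) + 1) := by omega
    rw [hsplit, Finset.sum_range_add]
    have h1 : ∑ l ∈ range r, (if r ≤ l then (-1:ℝ) ^ (l - r) / ((l - r).factorial : ℝ) else 0) = 0 := by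
      apply Finset.sum_eq_zero
      intro l hl
      rw [if_neg (by have := mem_range.1 hl; omega)]
    have h2 : ∀ t ∈ range ((k - r) + 1),
        (if r ≤ r + t then (-1:ℝ) ^ ((r + t) - r) / (((r + t) - r).factorial : ℝ) else 0)
          = (-1:ℝ) ^ t / (t.factorial : ℝ) := by
      intro t _
      rw [if_pos (Nat.le_add_right r t), Nat.add_sub_cancel_left]
    rw [h1, zero_add, Finset.sum_congr rfl h2]
    rw [pderang, if_pos hrk, derang]
    have hfac : (r.factorial : ℝ) * ((k.choose r : ℝ) * ((k - r).factorial : ℝ)) = (k.factorial : ℝ) := by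
      rw [← Nat.cast_mul, ← Nat.cast_mul]
      congr 1
      rw [← Nat.choose_mul_factorial_mul_factorial hrk]
      ring
    calc (k.factorial : ℝ) * ∑ t ∈ range ((k - r) + 1), (-1:ℝ) ^ t / (t.factorial : ℝ)
        = (r.factorial : ℝ) * ((k.choose r : ℝ) * ((k - r).factorial : ℝ))
            * ∑ t ∈ range ((k - r) + 1), (-1:ℝ) ^ t / (t.factorial : ℝ) := by rw [hfac]
      _ = _ := by ring
  · have h0 : ∑ l ∈ range (k + 1), (if r ≤ l then (-1:ℝ) ^ (l - r) / ((l - r).factorial : ℝ) else 0) = 0 := by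
      apply Finset.sum_eq_zero
      intro l hl
      rw [if_neg (by have := mem_range.1 hl; omega)]
    rw [h0, pderang, if_neg (by omega)]
    ring

lemma main_ident (n r : ℕ) :
    ∑ i ∈ range (r + 1), (-1:ℝ) ^ (r - i) * (r.choose i : ℝ) *
        (∑' j : ℕ, (-1 : ℝ) ^ j / (j.factorial : ℝ) * ordBellR n (i + j))
      = (r.factorial : ℝ) * Real.exp (-1) * pdb n r := by
  have stepA : ∀ i ∈ range (r + 1), (-1:ℝ) ^ (r - i) * (r.choose i : ℝ) *
        (∑' j : ℕ, (-1 : ℝ) ^ j / (j.factorial : ℝ) * ordBellR n (i + j))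
      = ∑ k ∈ range (n + 1), ∑ l ∈ range (k + 1), ∑ a ∈ range (l + 1),
          (((stirling2 n k : ℝ) * (k.factorial : ℝ)) *
            ((-1 : ℝ) ^ (l - a) / ((l - a).factorial : ℝ) * Real.exp (-1))) *
          ((-1:ℝ) ^ (r - i) * (r.choose i : ℝ) * (i.choose a : ℝ)) := by
    intro i _
    rw [tsum_f n i, Finset.mul_sum]
    refine Finset.sum_congr rfl fun k _ => ?_
    rw [Finset.mul_sum]
    refine Finset.sum_congr rfl fun l _ => ?_
    rw [Finset.mul_sum]
    refine Finset.sum_congr rfl fun a _ => ?_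
    ring
  rw [Finset.sum_congr rfl stepA]
  rw [Finset.sum_comm]
  have stepB : ∀ k ∈ range (n + 1),
      ∑ i ∈ range (r + 1), ∑ l ∈ range (k + 1), ∑ a ∈ range (l + 1),
          (((stirling2 n k : ℝ) * (k.factorial : ℝ)) *
            ((-1 : ℝ) ^ (l - a) / ((l - a).factorial : ℝ) * Real.exp (-1))) *
          ((-1:ℝ) ^ (r - i) * (r.choose i : ℝ) * (i.choose a : ℝ))
      = ((stirling2 n k : ℝ) * Real.exp (-1)) * ((r.factorial : ℝ) * pderang k r) := by
    intro k _
    rw [Finset.sum_comm]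
    have stepC : ∀ l ∈ range (k + 1),
        ∑ i ∈ range (r + 1), ∑ a ∈ range (l + 1),
            (((stirling2 n k : ℝ) * (k.factorial : ℝ)) *
              ((-1 : ℝ) ^ (l - a) / ((l - a).factorial : ℝ) * Real.exp (-1))) *
            ((-1:ℝ) ^ (r - i) * (r.choose i : ℝ) * (i.choose a : ℝ))
        = ((stirling2 n k : ℝ) * Real.exp (-1)) * ((k.factorial : ℝ) *
            (if r ≤ l then (-1:ℝ) ^ (l - r) / ((l - r).factorial : ℝ) else 0)) := by
      intro l _
      rw [Finset.sum_comm]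
      have stepD : ∀ a ∈ range (l + 1),
          ∑ i ∈ range (r + 1),
              (((stirling2 n k : ℝ) * (k.factorial : ℝ)) *
                ((-1 : ℝ) ^ (l - a) / ((l - a).factorial : ℝ) * Real.exp (-1))) *
              ((-1:ℝ) ^ (r - i) * (r.choose i : ℝ) * (i.choose a : ℝ))
          = if a = r then (((stirling2 n k : ℝ) * (k.factorial : ℝ)) *
                ((-1 : ℝ) ^ (l - a) / ((l - a).factorial : ℝ) * Real.exp (-1))) else 0 := by
        intro a _
        rw [← Finset.mul_sum, delta_sum r a]
        rw [mul_ite, mul_one, mul_zero]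
      rw [Finset.sum_congr rfl stepD]
      rw [Finset.sum_ite_eq' (range (l + 1)) r]
      rcases le_or_gt r l with h | h
      · rw [if_pos (mem_range.2 (by omega)), if_pos h]
        ring
      · rw [if_neg (by rw [mem_range]; omega), if_neg (by omega)]
        ring
    rw [Finset.sum_congr rfl stepC, ← Finset.mul_sum, ← Finset.mul_sum, per_k k r]
  rw [Finset.sum_congr rfl stepB, pdb, Finset.mul_sum]
  refine Finset.sum_congr rfl fun k _ => ?_
  ring

end AuxLemmas

/-- For `n ≥ 1`, each series `∑_{j≥0} ((-1)^j/j!) w_{n,i+j}` converges, and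
`∑_{i=0}^r (-1)^{r-i} C(r,i) ∑_{j≥0} ((-1)^j/j!) w_{n,i+j} = (r!/e) w̃_{n,r}`;
in particular `∑_{j≥0} ((-1)^j/j!) w_{n,j} = w̃_n / e`. -/
theorem sum_alternating_ordBellR_eq (n r : ℕ) (hn : 1 ≤ n) :
    (∀ i ≤ r, Summable fun j : ℕ => (-1 : ℝ) ^ j / (j.factorial : ℝ) * ordBellR n (i + j)) ∧
    (∑ i ∈ Finset.range (r + 1), (-1 : ℝ) ^ (r - i) * (r.choose i : ℝ) *
        ∑' j : ℕ, (-1 : ℝ) ^ j / (j.factorial : ℝ) * ordBellR n (i + j) =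
      ((r.factorial : ℝ) / Real.exp 1) * pdb n r) ∧
    (∑' j : ℕ, (-1 : ℝ) ^ j / (j.factorial : ℝ) * ordBellR n j = pdb n 0 / Real.exp 1) := by
  refine ⟨fun i _ => summable_f n i, ?_, ?_⟩
  · rw [main_ident n r, Real.exp_neg]
    field_simp
  · have h0 := main_ident n 0
    rw [Finset.sum_range_one] at h0
    norm_num at h0
    rw [h0, Real.exp_neg]
    field_simp
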